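/- A tree shift X ⊆ A^{Σ*} is sofic if and only if there exists an unrestricted Rabin automaton 𝒜 such that X = Sh_𝒜. -/

import Mathlib

/-! Common definitions: configurations over the regular rooted tree `Σ*`
(words = `List Sg`), the shift action, tree shifts, blocks, shifts of finite
type, cellular automata, sofic tree shifts, unrestricted Rabin automata. -/

/-- The shift action: `f^w (w') = f (w ++ w')`. -/
def shiftMap {Sg A : Type} (f : List Sg → A) (w : List Sg) : List Sg → A :=
  fun w' => f (w ++ w')

/-- The orbit `{f^w : w ∈ Σ*}` of a configuration under the shift action. -/
def shiftOrbit {Sg A : Type} (f : List Sg → A) : Set (List Sg → A) :=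
  Set.range (shiftMap f)

/-- A configuration is regular if its orbit under the shift action is finite. -/
def IsRegularConfig {Sg A : Type} (f : List Sg → A) : Prop :=
  (shiftOrbit f).Finite

/-- A tree shift: a subset of `A^{Σ*}` that is closed in the prodiscrete
topology and invariant under the shift action. -/
def IsTreeShift {Sg A : Type} [TopologicalSpace A] (X : Set (List Sg → A)) : Prop :=
  IsClosed X ∧ ∀ f ∈ X, ∀ w : List Sg, shiftMap f w ∈ X

/-- A block of size `n + 1`: a map `Δ_{n+1} → A`, where `Δ_k` is the set of
words of length `< k` (so blocks have size `≥ 1`). -/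
def TreeBlock (Sg A : Type) : Type :=
  (n : ℕ) × ({w : List Sg // w.length < n + 1} → A)

/-- The restriction of `f^w` to `Δ_{n+1}`, viewed as a block. -/
def blockAt {Sg A : Type} (f : List Sg → A) (w : List Sg) (n : ℕ) : TreeBlock Sg A :=
  ⟨n, fun m => f (w ++ m.val)⟩

/-- `X(F)`: the set of configurations avoiding every block in `F`. -/
def avoids {Sg A : Type} (F : Set (TreeBlock Sg A)) : Set (List Sg → A) :=
  {f | ∀ (w : List Sg) (n : ℕ), blockAt f w n ∉ F}

/-- A tree shift of finite type: `X = X(F)` for some finite set `F` of blocks. -/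
def IsSFT {Sg A : Type} (X : Set (List Sg → A)) : Prop :=
  ∃ F : Set (TreeBlock Sg A), F.Finite ∧ X = avoids F

/-- A cellular automaton `τ : X → B^{Σ*}`: there are a finite memory set
`M ⊆ Σ*` and a local map `μ : A^M → B` with `τ(f)(w) = μ((f^w)|_M)`. -/
def IsCellularAutomaton {Sg A B : Type} (X : Set (List Sg → A))
    (τ : X → List Sg → B) : Prop :=
  ∃ (M : Finset (List Sg)) (μ : ({m : List Sg // m ∈ M} → A) → B),
    ∀ (f : X) (w : List Sg), τ f w = μ (fun m => f.val (w ++ m.val))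

/-- A sofic tree shift: the image of a tree shift of finite type under a
cellular automaton. -/
def IsSofic {Sg A : Type} (X : Set (List Sg → A)) : Prop :=
  ∃ (C : Type) (_ : Finite C) (Y : Set (List Sg → C)) (τ : Y → List Sg → A),
    IsSFT Y ∧ IsCellularAutomaton Y τ ∧ X = Set.range τ

/-- An unrestricted Rabin automaton: a nonempty finite state set `S` and a set
of transition bundles `𝒯 ⊆ S × A × S^Σ`. -/
structure URA (Sg A : Type) where
  S : Type
  [finS : Finite S]
  [neS : Nonempty S]
  T : Set (S × A × (Sg → S))

attribute [instance] URA.finS URA.neS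

/-- Acceptance of a configuration by an unrestricted Rabin automaton. -/
def URA.Accepts {Sg A : Type} (𝒜 : URA Sg A) (f : List Sg → A) : Prop :=
  ∃ α : List Sg → 𝒜.S,
    ∀ w : List Sg, (α w, f w, fun σ => α (w ++ [σ])) ∈ 𝒜.T

/-- `Sh_𝒜`: the set of configurations accepted by `𝒜`. -/
def URA.shift {Sg A : Type} (𝒜 : URA Sg A) : Set (List Sg → A) :=
  {f | 𝒜.Accepts f}

/-- `𝒜` is essential if every state is the source of some transition bundle. -/
def URA.Essential {Sg A : Type} (𝒜 : URA Sg A) : Prop :=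
  ∀ s : 𝒜.S, ∃ t ∈ 𝒜.T, t.1 = s

/-- `𝒜` is co-deterministic if for every terminal sequence and label there is
at most one transition bundle with that terminal sequence and label. -/
def URA.CoDeterministic {Sg A : Type} (𝒜 : URA Sg A) : Prop :=
  ∀ t ∈ 𝒜.T, ∀ t' ∈ 𝒜.T, t.2.1 = t'.2.1 → t.2.2 = t'.2.2 → t = t'

/-- `𝒜` is co-complete if for every terminal sequence and label there is at
least one transition bundle with that terminal sequence and label. -/
def URA.CoComplete {Sg A : Type} (𝒜 : URA Sg A) : Prop :=
  ∀ (s : Sg → 𝒜.S) (a : A), ∃ t ∈ 𝒜.T, t.2.1 = a ∧ t.2.2 = s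

/-- One step along a bundle path: some transition bundle has source `s` and
`σ`-terminal state `s'` for some `σ`. -/
def URA.Step {Sg A : Type} (𝒜 : URA Sg A) (s s' : 𝒜.S) : Prop :=
  ∃ t ∈ 𝒜.T, t.1 = s ∧ ∃ σ : Sg, t.2.2 σ = s'

/-- `𝒜` is strongly connected if any state can be joined to any other by a
bundle path (possibly empty). -/
def URA.StronglyConnected {Sg A : Type} (𝒜 : URA Sg A) : Prop :=
  ∀ s s' : 𝒜.S, Relation.ReflTransGen 𝒜.Step s s'

/-- A tree shift `X` is irreducible if for all blocks `p ∈ X_n`, `q ∈ X_m`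
there is `f ∈ X` with `f|_{Δ_n} = p` and, for every `w ∈ Σ^n`, some `v` with
`f|_{w v Δ_m} = w v · q`. -/
def IsIrreducibleShift {Sg A : Type} (X : Set (List Sg → A)) : Prop :=
  ∀ (n m : ℕ) (p q : List Sg → A),
    (∃ fp ∈ X, ∀ u : List Sg, u.length < n → fp u = p u) →
    (∃ fq ∈ X, ∀ u : List Sg, u.length < m → fq u = q u) →
    ∃ f ∈ X, (∀ u : List Sg, u.length < n → f u = p u) ∧
      ∀ w : List Sg, w.length = n → ∃ v : List Sg,
        ∀ u : List Sg, u.length < m → f (w ++ v ++ u) = q u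

/-- A subtree of `Σ*`: contains the root `ε` and is prefix-closed. -/
def IsSubtree {Sg : Type} (T : Set (List Sg)) : Prop :=
  ([] : List Sg) ∈ T ∧ ∀ u v : List Sg, u ++ v ∈ T → u ∈ T

/-- A full subtree: each vertex has either all of its children or none. -/
def IsFullSubtree {Sg : Type} (T : Set (List Sg)) : Prop :=
  IsSubtree T ∧ ∀ w ∈ T, (∀ σ : Sg, w ++ [σ] ∈ T) ∨ (∀ σ : Sg, w ++ [σ] ∉ T)

/-- `T⁺ = T ∪ {wσ : w ∈ T, σ ∈ Σ}`. -/
def treePlus {Sg : Type} (T : Set (List Sg)) : Set (List Sg) :=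
  T ∪ {x | ∃ w ∈ T, ∃ σ : Sg, x = w ++ [σ]}

/-- Acceptance of the full-tree-pattern `p : T → A` by the finite-tree
automaton `𝒜(I, F)` (initial states `I`, final state `F`). -/
def FTAccepts {Sg A : Type} (𝒜 : URA Sg A) (I : Set 𝒜.S) (F : 𝒜.S)
    (T : Set (List Sg)) (p : List Sg → A) : Prop :=
  ∃ α : List Sg → 𝒜.S,
    (∀ w ∈ T, (α w, p w, fun σ => α (w ++ [σ])) ∈ 𝒜.T) ∧
    α [] ∈ I ∧
    ∀ w ∈ treePlus T, w ∉ T → α w = F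

/-- A Rabin automaton: an unrestricted Rabin automaton together with a set of
initial states and a family of accepting sets. -/
structure RabinAutomaton (Sg A : Type) where
  toURA : URA Sg A
  I : Set toURA.S
  Acc : Set (Set toURA.S)

/-- Acceptance by a Rabin automaton: a homomorphism realizing `f`, starting at
an initial state, and such that along every right-infinite word, the set of
states visited infinitely often belongs to the family of accepting sets. -/
def RabinAccepts {Sg A : Type} (𝒜 : RabinAutomaton Sg A) (f : List Sg → A) : Prop :=
  ∃ α : List Sg → 𝒜.toURA.S,
    (∀ w : List Sg, (α w, f w, fun σ => α (w ++ [σ])) ∈ 𝒜.toURA.T) ∧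
    α [] ∈ 𝒜.I ∧
    ∀ ω : ℕ → Sg,
      {s : 𝒜.toURA.S | ∀ N : ℕ, ∃ n ≥ N, α ((List.range n).map ω) = s} ∈ 𝒜.Acc

/-- Auxiliary: the subtype of lists of bounded length over a finite alphabet
is finite. -/
lemma finite_bdd_lists {Sg : Type} [Finite Sg] (n : ℕ) :
    Finite {l : List Sg // l.length < n} :=
  (List.finite_length_lt Sg n).to_subtype

/-- Direction `⇐`: any `Sh_𝒜` is sofic. -/
lemma shift_isSofic {Sg A : Type} [Finite Sg] [Nonempty Sg] [Finite A]
    (𝒜 : URA Sg A) : IsSofic 𝒜.shift := by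
  classical
  set C := {t : 𝒜.S × A × (Sg → 𝒜.S) // t ∈ 𝒜.T} with hCdef
  haveI : Finite C := Subtype.finite
  haveI : Finite {w : List Sg // w.length < 2} := finite_bdd_lists 2
  set F : Set (TreeBlock Sg C) :=
    {b | ∃ p : {w : List Sg // w.length < 2} → C, b = ⟨1, p⟩ ∧
      ∃ σ : Sg, (p ⟨[], by simp⟩).val.2.2 σ ≠ (p ⟨[σ], by simp⟩).val.1} with hFdef
  have hFfin : F.Finite := by
    apply Set.Finite.subset (Set.finite_range
      (fun p : ({w : List Sg // w.length < 2} → C) => (⟨1, p⟩ : TreeBlock Sg C)))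
    rintro b ⟨p, hp, -⟩
    exact ⟨p, hp.symm⟩
  have hYchar : ∀ g : List Sg → C, g ∈ avoids F ↔
      ∀ (w : List Sg) (σ : Sg), (g w).val.2.2 σ = (g (w ++ [σ])).val.1 := by
    intro g
    constructor
    · intro hg w σ
      by_contra hne
      apply hg w 1
      refine ⟨fun m => g (w ++ m.val), rfl, σ, ?_⟩
      simpa using hne
    · intro hg w k hk
      obtain ⟨p, hp, σ, hσ⟩ := hk
      unfold blockAt at hp
      obtain ⟨hk1, hpe⟩ := Sigma.mk.inj_iff.mp hp
      subst hk1
      have hpeq : p = fun m => g (w ++ m.val) := (eq_of_heq hpe).symm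
      subst hpeq
      apply hσ
      simpa using hg w σ
  refine ⟨C, inferInstance, avoids F, fun g w => (g.val w).val.2.1, ⟨F, hFfin, rfl⟩,
    ?_, ?_⟩
  · refine ⟨{[]}, fun v => (v ⟨[], Finset.mem_singleton_self []⟩).val.2.1, ?_⟩
    intro f w
    simp
  · ext f
    constructor
    · rintro ⟨α, hα⟩
      refine ⟨⟨fun w => ⟨(α w, f w, fun σ => α (w ++ [σ])), hα w⟩, ?_⟩, ?_⟩
      · exact (hYchar _).mpr (fun w σ => rfl)
      · rfl
    · rintro ⟨⟨g, hg⟩, rfl⟩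
      refine ⟨fun w => (g w).val.1, fun w => ?_⟩
      have h := (hYchar g).mp hg
      have heq : ((g w).val.1, (g w).val.2.1, fun σ => (g (w ++ [σ])).val.1)
          = (g w).val := by
        refine Prod.ext rfl (Prod.ext rfl ?_)
        exact funext fun σ => (h w σ).symm
      rw [heq]
      exact (g w).property

/-- Direction `⇒`: any sofic tree shift is `Sh_𝒜` for some `𝒜`. -/
lemma isSofic_shift {Sg A : Type} [Finite Sg] [Nonempty Sg] [Finite A]
    (X : Set (List Sg → A)) (h : IsSofic X) : ∃ 𝒜 : URA Sg A, X = 𝒜.shift := by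
  classical
  obtain ⟨C, hCfin, Y, τ, ⟨F, hFfin, hYF⟩, ⟨M, μ, hμ⟩, hXr⟩ := h
  haveI : Finite C := hCfin
  cases isEmpty_or_nonempty C with
  | inl hempty =>
    refine ⟨{ S := Unit, T := ∅ }, ?_⟩
    have hXe : X = ∅ := by
      rw [hXr]
      ext f
      simp only [Set.mem_range, Set.mem_empty_iff_false, iff_false]
      rintro ⟨g, -⟩
      exact (hempty.elim (g.val []))
    rw [hXe]
    ext f
    simp only [Set.mem_empty_iff_false, URA.shift, URA.Accepts, Set.mem_setOf_eq,
      false_iff]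
    rintro ⟨α, hα⟩
    exact (hα [])
  | inr hne =>
    set n := max (hFfin.toFinset.sup Sigma.fst) (M.sup List.length) with hndef
    have hM : ∀ m ∈ M, m.length < n + 1 := by
      intro m hm
      have := Finset.le_sup (f := List.length) hm
      omega
    have hF : ∀ b ∈ F, b.1 ≤ n := by
      intro b hb
      have := Finset.le_sup (f := Sigma.fst) (hFfin.mem_toFinset.mpr hb)
      exact le_trans this (le_max_left _ _)
    haveI hD : Finite {u : List Sg // u.length < n + 1} := finite_bdd_lists (n + 1)
    set S := ({u : List Sg // u.length < n + 1} → C) with hSdef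
    haveI : Nonempty S := ⟨fun _ => Classical.arbitrary C⟩
    set T : Set (S × A × (Sg → S)) :=
      {t | (∀ (σ : Sg) (u : List Sg) (h : u.length < n),
              t.2.2 σ ⟨u, by omega⟩ = t.1 ⟨σ :: u, by simp; omega⟩) ∧
           t.2.1 = μ (fun m => t.1 ⟨m.val, hM m.val m.property⟩) ∧
           ∀ (k : ℕ) (hk : k ≤ n),
             (⟨k, fun m => t.1 ⟨m.val, by have := m.property; omega⟩⟩ :
               TreeBlock Sg C) ∉ F} with hTdef
    refine ⟨{ S := S, T := T }, ?_⟩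
    ext f
    constructor
    · -- f ∈ X → accepted
      intro hf
      rw [hXr] at hf
      obtain ⟨g, hgf⟩ := hf
      refine ⟨fun w => fun u => g.val (w ++ u.val), fun w => ?_⟩
      refine ⟨?_, ?_, ?_⟩
      · intro σ u hu
        show g.val ((w ++ [σ]) ++ u) = g.val (w ++ σ :: u)
        rw [List.append_assoc, List.singleton_append]
      · show f w = _
        rw [← hgf]
        exact hμ g w
      · intro k hk
        have hgY : g.val ∈ avoids F := hYF ▸ g.property
        exact hgY w k
    · -- accepted → f ∈ X
      rintro ⟨α, hα⟩
      have key : ∀ (u : List Sg) (w : List Sg) (h : u.length < n + 1),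
          α w ⟨u, h⟩ = α (w ++ u) ⟨[], by simp⟩ := by
        intro u
        induction u with
        | nil =>
          intro w h
          rw [List.append_nil]
        | cons σ u ih =>
          intro w h
          have hu : u.length < n := by simpa using h
          have h1 := (hα w).1 σ u hu
          have h2 := ih (w ++ [σ]) (by omega)
          rw [List.append_assoc, List.singleton_append] at h2
          calc α w ⟨σ :: u, h⟩ = α (w ++ [σ]) ⟨u, by omega⟩ := h1.symm
            _ = α (w ++ σ :: u) ⟨[], by simp⟩ := h2
      set g : List Sg → C := fun w => α w ⟨[], by simp⟩ with hgdef
      have keyg : ∀ (w u : List Sg) (h : u.length < n + 1),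
          α w ⟨u, h⟩ = g (w ++ u) := fun w u h => key u w h
      have hgY : g ∈ Y := by
        rw [hYF]
        intro w k
        by_cases hk : k ≤ n
        · have hblock : blockAt g w k
              = ⟨k, fun m => α w ⟨m.val, by have := m.property; omega⟩⟩ := by
            unfold blockAt
            congr 1
            exact funext fun m => (keyg w m.val _).symm
          rw [hblock]
          exact (hα w).2.2 k hk
        · intro hmem
          have := hF _ hmem
          simp only [blockAt] at this
          omega
      refine hXr ▸ ⟨⟨g, hgY⟩, ?_⟩
      funext w
      rw [hμ ⟨g, hgY⟩ w]
      have hlab : f w = μ fun m => α w ⟨m.val, hM m.val m.property⟩ := (hα w).2.1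
      rw [hlab]
      congr 1
      exact funext fun m => (keyg w m.val (hM m.val m.property)).symm

/-- a tree shift is sofic iff it is accepted by some unrestricted
Rabin automaton. -/
theorem sofic_iff_accepted {Sg A : Type} [Finite Sg] [Nonempty Sg] [Finite A]
    [TopologicalSpace A] [DiscreteTopology A]
    (X : Set (List Sg → A)) (hX : IsTreeShift X) :
    IsSofic X ↔ ∃ 𝒜 : URA Sg A, X = 𝒜.shift :=
  ⟨isSofic_shift X, fun ⟨𝒜, h𝒜⟩ => h𝒜 ▸ shift_isSofic 𝒜⟩
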